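/- arXiv:2108.05745 — 2 statements merged into one kernel-verified Lean document; each statement's English description precedes it below -/
import Mathlib

section
/- Let d ≥ 1 and let Q ⊂ ℝ^d be a centrally symmetric convex polytope, Q = -Q. Then there exists a set of at most 2d vertices of Q whose convex hull Q' satisfies Q ⊆ 3d · Q'. -/
open Set MeasureTheory Pointwise Matrix

section GramAux

variable {E : Type*} [NormedAddCommGroup E] [InnerProductSpace ℝ E]

noncomputable def gramMat {k : ℕ} (v : Fin k → E) : Matrix (Fin k) (Fin k) ℝ :=
  Matrix.of fun i j => inner ℝ (v i) (v j)

lemma gramMat_dot {k : ℕ} (v : Fin k → E) (x : Fin k → ℝ) :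
    x ⬝ᵥ ((gramMat v) *ᵥ x) = inner ℝ (∑ i, x i • v i) (∑ i, x i • v i) := by
  simp only [dotProduct, Matrix.mulVec, gramMat, Matrix.of_apply, sum_inner, inner_sum,
    real_inner_smul_left, real_inner_smul_right, Finset.mul_sum]
  rw [Finset.sum_comm]
  congr 1; ext i; congr 1; ext j; ring

lemma gramMat_posDef {k : ℕ} {v : Fin k → E} (hv : LinearIndependent ℝ v) :
    (gramMat v).PosDef := by
  rw [Matrix.posDef_iff_dotProduct_mulVec]
  constructor
  · ext i j
    simp [Matrix.conjTranspose, gramMat, real_inner_comm]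
  · intro x hx
    rw [star_trivial, gramMat_dot]
    rw [real_inner_self_eq_norm_sq]
    have : ∑ i, x i • v i ≠ 0 := by
      intro h
      exact hx (funext fun i => Fintype.linearIndependent_iff.1 hv x h i)
    exact pow_pos (norm_pos_iff.mpr this) 2

lemma linearIndependent_of_gramMat_det_ne_zero {k : ℕ} {v : Fin k → E}
    (h : (gramMat v).det ≠ 0) : LinearIndependent ℝ v := by
  by_contra hv
  obtain ⟨g, hg, i, hgi⟩ := Fintype.not_linearIndependent_iff.1 hv
  apply h
  rw [← Matrix.exists_mulVec_eq_zero_iff]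
  refine ⟨g, fun h0 => hgi (congrFun h0 i), ?_⟩
  ext a
  simp only [Matrix.mulVec, dotProduct, gramMat, Matrix.of_apply, Pi.zero_apply]
  calc ∑ j, inner ℝ (v a) (v j) * g j = inner ℝ (v a) (∑ j, g j • v j) := by
        rw [inner_sum]; congr 1; ext j; rw [real_inner_smul_right]; ring
    _ = 0 := by rw [hg, inner_zero_right]

lemma gramMat_update_det {k : ℕ} (v : Fin k → E) (i : Fin k) (c : Fin k → ℝ) :
    (gramMat (Function.update v i (∑ j, c j • v j))).det = (c i)^2 * (gramMat v).det := by
  classical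
  set B : Matrix (Fin k) (Fin k) ℝ := (1 : Matrix (Fin k) (Fin k) ℝ).updateRow i c with hB
  have hupd : ∀ a, Function.update v i (∑ j, c j • v j) a = ∑ p, B a p • v p := by
    intro a
    by_cases ha : a = i
    · subst ha
      simp [hB, Matrix.updateRow_self, Function.update_self]
    · simp [hB, Function.update_of_ne ha, Matrix.updateRow_ne ha, Matrix.one_apply]
  have hmat : gramMat (Function.update v i (∑ j, c j • v j)) = B * gramMat v * Bᵀ := by
    ext a b
    simp only [gramMat, Matrix.of_apply, hupd, Matrix.mul_apply, Matrix.transpose_apply,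
      sum_inner, inner_sum, real_inner_smul_left, real_inner_smul_right, Finset.sum_mul,
      Finset.mul_sum]
    congr 1; ext p; congr 1; ext q; ring
  have hdetB : B.det = c i := by
    rw [hB, ← Matrix.det_transpose, ← Matrix.updateCol_transpose, Matrix.transpose_one,
      ← Matrix.cramer_apply, Matrix.cramer_one]
    rfl
  rw [hmat, Matrix.det_mul, Matrix.det_mul, Matrix.det_transpose, hdetB]
  ring

end GramAux

/-- If `Q ⊆ ℝ^d` is a centrally symmetric convex polytope (`Q = -Q`),
then there are at most `2d` vertices of `Q` whose convex hull `Q'`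
satisfies `Q ⊆ 3d • Q'`. -/
theorem sparse_approx_symmetric_polytope (d : ℕ) (hd : 1 ≤ d)
    (Q : Set (EuclideanSpace ℝ (Fin d)))
    (hQpoly : ∃ V : Finset (EuclideanSpace ℝ (Fin d)), Q = convexHull ℝ (V : Set (EuclideanSpace ℝ (Fin d))))
    (hQsymm : Q = -Q) :
    ∃ W : Finset (EuclideanSpace ℝ (Fin d)),
      (W : Set (EuclideanSpace ℝ (Fin d))) ⊆ Set.extremePoints ℝ Q ∧
      W.card ≤ 2 * d ∧
      Q ⊆ ((3 : ℝ) * d) • convexHull ℝ (W : Set (EuclideanSpace ℝ (Fin d))) := by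
  classical
  obtain ⟨V, hV⟩ := hQpoly
  rcases Q.eq_empty_or_nonempty with hQe | hQne
  · exact ⟨∅, by simp [hQe], by simp, by simp [hQe]⟩
  set S := Set.extremePoints ℝ Q with hSdef
  have hSV : S ⊆ (V : Set (EuclideanSpace ℝ (Fin d))) := by
    rw [hSdef, hV]; exact extremePoints_convexHull_subset
  have hSfin : S.Finite := V.finite_toSet.subset hSV
  have hQconv : Convex ℝ Q := hV ▸ convex_convexHull ℝ _
  have hQcomp : IsCompact Q := hV ▸ V.finite_toSet.isCompact_convexHull ℝ
  have hQS : convexHull ℝ S = Q := by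
    have h1 := closure_convexHull_extremePoints hQcomp hQconv
    rwa [(hSfin.isClosed_convexHull ℝ).closure_eq] at h1
  have hSne : S.Nonempty := by
    rcases S.eq_empty_or_nonempty with h | h
    · exfalso
      have : Q = ∅ := by rw [← hQS, h, convexHull_empty]
      exact hQne.ne_empty this
    · exact h
  have hSneg : ∀ x ∈ S, -x ∈ S := by
    intro x hx
    obtain ⟨hxQ, hxext⟩ := hx
    refine ⟨?_, ?_⟩
    · rw [hQsymm]; simpa using hxQ
    · intro y hy z hz hseg
      have hy' : -y ∈ Q := by rw [hQsymm]; simpa using hy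
      have hz' : -z ∈ Q := by rw [hQsymm]; simpa using hz
      have hseg' : x ∈ openSegment ℝ (-y) (-z) := by
        obtain ⟨a, b, ha, hb, hab, h⟩ := hseg
        exact ⟨a, b, ha, hb, hab, by rw [smul_neg, smul_neg, ← neg_add, h, neg_neg]⟩
      have h1 := hxext hy' hz' hseg'
      rw [← h1, neg_neg]
  set k := Module.finrank ℝ (Submodule.span ℝ S) with hkdef
  have hkd : k ≤ d := by
    have := Submodule.finrank_le (Submodule.span ℝ S)
    rwa [finrank_euclideanSpace_fin] at this
  rcases Nat.eq_zero_or_pos k with hk0 | hkpos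
  · -- degenerate case: span S = ⊥, so S = {0}, Q = {0}
    have hspan : Submodule.span ℝ S = ⊥ := Submodule.finrank_eq_zero.1 hk0
    have hS0 : S = {0} := by
      apply Subset.antisymm
      · intro x hx
        have hx' : x ∈ Submodule.span ℝ S := Submodule.subset_span hx
        rw [hspan, Submodule.mem_bot] at hx'
        simp [hx']
      · obtain ⟨s, hs⟩ := hSne
        intro x hx
        have hs' : s ∈ Submodule.span ℝ S := Submodule.subset_span hs
        rw [hspan, Submodule.mem_bot] at hs'
        simp only [mem_singleton_iff] at hx
        rw [hx, ← hs']; exact hs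
    refine ⟨{0}, ?_, ?_, ?_⟩
    · simp [hS0]
    · simp; omega
    · intro x hx
      have hx0 : x = 0 := by
        rw [← hQS, hS0] at hx
        simpa [convexHull_singleton] using hx
      rw [hx0]
      refine Set.mem_smul_set.2 ⟨0, ?_, smul_zero _⟩
      simp [convexHull_singleton]
  · -- main case
    obtain ⟨b, hbS, hbspan, hbind⟩ := exists_linearIndependent ℝ S
    have hbfin : b.Finite := hSfin.subset hbS
    haveI := hbfin.fintype
    have hbcard : b.toFinset.card = k := by
      rw [hkdef, ← hbspan, finrank_span_set_eq_card hbind]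
    have hcard : Fintype.card b = k := by rw [← Set.toFinset_card, hbcard]
    let e : Fin k ≃ b := (Fintype.equivFinOfCardEq hcard).symm
    set v₀ : Fin k → EuclideanSpace ℝ (Fin d) := fun i => (e i : EuclideanSpace ℝ (Fin d)) with hv₀
    have hv₀ind : LinearIndependent ℝ v₀ := hbind.comp e e.injective
    have hv₀S : ∀ i, v₀ i ∈ S := fun i => hbS (e i).2
    -- maximize the Gram determinant over tuples from S
    set F : Finset (Fin k → EuclideanSpace ℝ (Fin d)) :=
      Fintype.piFinset (fun _ : Fin k => hSfin.toFinset) with hF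
    have hv₀F : v₀ ∈ F := by
      rw [hF, Fintype.mem_piFinset]
      intro i; rw [Set.Finite.mem_toFinset]; exact hv₀S i
    obtain ⟨v, hvF, hvmax⟩ := F.exists_max_image (fun f => (gramMat f).det) ⟨v₀, hv₀F⟩
    have hvS : ∀ i, v i ∈ S := by
      rw [hF, Fintype.mem_piFinset] at hvF
      intro i; have := hvF i; rwa [Set.Finite.mem_toFinset] at this
    have hD : 0 < (gramMat v).det :=
      lt_of_lt_of_le (gramMat_posDef hv₀ind).det_pos (hvmax v₀ hv₀F)
    have hvind : LinearIndependent ℝ v := linearIndependent_of_gramMat_det_ne_zero hD.ne'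
    have hvspan : Submodule.span ℝ (Set.range v) = Submodule.span ℝ S := by
      apply Submodule.eq_of_le_of_finrank_le
      · exact Submodule.span_mono (Set.range_subset_iff.2 hvS)
      · rw [finrank_span_eq_card hvind]
        simp [hkdef]
    -- all of Q has coordinates bounded by 1 in the family v
    set R : Set (EuclideanSpace ℝ (Fin d)) :=
      {x | ∃ c : Fin k → ℝ, (∀ i, |c i| ≤ 1) ∧ ∑ i, c i • v i = x} with hR
    have hSR : S ⊆ R := by
      intro s hs
      have hsspan : s ∈ Submodule.span ℝ (Set.range v) :=
        hvspan ▸ Submodule.subset_span hs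
      obtain ⟨c, hc⟩ := (Submodule.mem_span_range_iff_exists_fun ℝ).1 hsspan
      refine ⟨c, fun i => ?_, hc⟩
      have hupdF : Function.update v i s ∈ F := by
        rw [hF, Fintype.mem_piFinset]
        intro j
        rw [Set.Finite.mem_toFinset]
        by_cases hj : j = i
        · subst hj; rw [Function.update_self]; exact hs
        · rw [Function.update_of_ne hj]; exact hvS j
      have h1 : (gramMat (Function.update v i s)).det ≤ (gramMat v).det := hvmax _ hupdF
      have h2 : (gramMat (Function.update v i s)).det = (c i)^2 * (gramMat v).det := by
        rw [← hc]; exact gramMat_update_det v i c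
      have h3 : (c i)^2 ≤ 1 := by
        rw [h2] at h1; nlinarith
      nlinarith [abs_nonneg (c i), sq_abs (c i)]
    have hRconv : Convex ℝ R := by
      intro x hx y hy a b ha hb hab
      obtain ⟨c, hc1, hc2⟩ := hx
      obtain ⟨c', hc1', hc2'⟩ := hy
      refine ⟨fun i => a * c i + b * c' i, fun i => ?_, ?_⟩
      · calc |a * c i + b * c' i| ≤ |a * c i| + |b * c' i| := abs_add_le _ _
          _ = a * |c i| + b * |c' i| := by
              rw [abs_mul, abs_mul, abs_of_nonneg ha, abs_of_nonneg hb]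
          _ ≤ a * 1 + b * 1 := by
              gcongr
              · exact hc1 i
              · exact hc1' i
          _ = 1 := by rw [mul_one, mul_one, hab]
      · rw [← hc2, ← hc2', Finset.smul_sum, Finset.smul_sum, ← Finset.sum_add_distrib]
        refine Finset.sum_congr rfl fun i _ => ?_
        rw [add_smul, mul_smul, mul_smul]
    have hQR : Q ⊆ R := by rw [← hQS]; exact convexHull_min hSR hRconv
    -- the desired vertex set
    set W : Finset (EuclideanSpace ℝ (Fin d)) :=
      (Finset.image v Finset.univ) ∪ (Finset.image (fun i => -v i) Finset.univ) with hW
    have hWS : (W : Set (EuclideanSpace ℝ (Fin d))) ⊆ S := by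
      intro x hx
      simp only [hW, Finset.coe_union, Finset.coe_image, Finset.coe_univ, Set.image_univ,
        Set.mem_union, Set.mem_range] at hx
      rcases hx with ⟨i, rfl⟩ | ⟨i, rfl⟩
      · exact hvS i
      · exact hSneg _ (hvS i)
    have hWcard : W.card ≤ 2 * d := by
      calc W.card ≤ (Finset.image v Finset.univ).card
            + (Finset.image (fun i => -v i) Finset.univ).card := Finset.card_union_le _ _
        _ ≤ k + k := by
            have h1 : (Finset.image v Finset.univ).card ≤ k := by
              simpa using Finset.card_image_le (s := (Finset.univ : Finset (Fin k))) (f := v)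
            have h2 : (Finset.image (fun i => -v i) Finset.univ).card ≤ k := by
              simpa using Finset.card_image_le (s := (Finset.univ : Finset (Fin k)))
                (f := fun i => -v i)
            omega
        _ ≤ 2 * d := by omega
    have hWmem : ∀ i, v i ∈ convexHull ℝ (W : Set (EuclideanSpace ℝ (Fin d))) := by
      intro i
      apply subset_convexHull
      simp [hW]
    have hWmemneg : ∀ i, -v i ∈ convexHull ℝ (W : Set (EuclideanSpace ℝ (Fin d))) := by
      intro i
      apply subset_convexHull
      simp [hW]
    have hW0 : (0 : EuclideanSpace ℝ (Fin d)) ∈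
        convexHull ℝ (W : Set (EuclideanSpace ℝ (Fin d))) := by
      have i0 : Fin k := ⟨0, hkpos⟩
      have h := (convex_convexHull ℝ (W : Set (EuclideanSpace ℝ (Fin d)))) (hWmem i0)
        (hWmemneg i0) (by norm_num : (0:ℝ) ≤ 1/2) (by norm_num : (0:ℝ) ≤ 1/2) (by norm_num)
      simpa using h
    refine ⟨W, fun x hx => hWS hx, hWcard, ?_⟩
    intro x hx
    obtain ⟨c, hc1, hc2⟩ := hQR hx
    have htpos : (0:ℝ) < 3 * d := by
      have h1 : (1:ℝ) ≤ d := by exact_mod_cast hd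
      nlinarith
    have hsumabs : ∑ i, |c i| ≤ (d:ℝ) := by
      calc ∑ i, |c i| ≤ ∑ _i : Fin k, (1:ℝ) := Finset.sum_le_sum (fun i _ => hc1 i)
        _ = k := by simp
        _ ≤ d := by exact_mod_cast hkd
    set wsign : Fin k → EuclideanSpace ℝ (Fin d) := fun i => if 0 ≤ c i then v i else -v i
      with hwsign
    set y : EuclideanSpace ℝ (Fin d) :=
      (∑ i, (|c i| / (3 * d)) • wsign i)
        + (1 - (∑ i, |c i|) / (3 * d)) • (0 : EuclideanSpace ℝ (Fin d)) with hy
    have hymem : y ∈ convexHull ℝ (W : Set (EuclideanSpace ℝ (Fin d))) := by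
      have h0 : (0:ℝ) ≤ 1 - (∑ i, |c i|) / (3 * d) := by
        have hle : (∑ i, |c i|) / (3 * d) ≤ 1 := by
          rw [div_le_one htpos]
          have h1 : (1:ℝ) ≤ d := by exact_mod_cast hd
          nlinarith [hsumabs]
        linarith
      have h := (convex_convexHull ℝ (W : Set (EuclideanSpace ℝ (Fin d)))).sum_mem
        (t := (Finset.univ : Finset (Option (Fin k))))
        (w := fun o => Option.elim o (1 - (∑ i, |c i|) / (3 * d)) (fun i => |c i| / (3 * d)))
        (z := fun o => Option.elim o 0 (fun i => wsign i))
        (fun o _ => by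
          cases o with
          | none => exact h0
          | some i => exact div_nonneg (abs_nonneg _) htpos.le)
        (by
          rw [Fintype.sum_option]
          simp only [Option.elim_none, Option.elim_some]
          rw [← Finset.sum_div]
          ring)
        (fun o _ => by
          cases o with
          | none => exact hW0
          | some i =>
            apply subset_convexHull
            by_cases h : 0 ≤ c i <;> simp [hwsign, hW, h])
      rw [Fintype.sum_option] at h
      simp only [Option.elim_none, Option.elim_some] at h
      rw [hy, add_comm]
      exact h
    refine Set.mem_smul_set.2 ⟨y, hymem, ?_⟩
    have hts : ∀ a : ℝ, (3 * (d:ℝ)) * (a / (3 * d)) = a := fun a => by field_simp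
    calc (3 * (d:ℝ)) • y
        = ∑ i, ((3 * (d:ℝ)) * (|c i| / (3 * d))) • wsign i := by
          rw [hy, smul_add, smul_zero, smul_zero, add_zero, Finset.smul_sum]
          refine Finset.sum_congr rfl fun i _ => ?_
          rw [smul_smul]
      _ = ∑ i, |c i| • wsign i := by
          refine Finset.sum_congr rfl fun i _ => ?_
          rw [hts]
      _ = ∑ i, c i • v i := by
          refine Finset.sum_congr rfl fun i _ => ?_
          by_cases h : 0 ≤ c i
          · simp only [hwsign, if_pos h, abs_of_nonneg h]
          · have h' := not_le.1 h
            simp only [hwsign, if_neg h]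
            rw [abs_of_neg h', neg_smul_neg]
      _ = x := hc2
end

section
/- Let Q ⊂ ℝ^d be a convex polytope with 0 in its interior, and let v₁, …, v_d be vertices of Q such that the simplex S = conv{0, v₁, …, v_d} has maximal d-dimensional volume among all simplices conv({0} ∪ W) where W ranges over sets of d vertices of Q. Then v₁, …, v_d are linearly independent and Q ⊆ P, where P = {β₁v₁ + ⋯ + β_d v_d : β_i ∈ [−1,1] for all i}. -/
open Set MeasureTheory

noncomputable def stdB (d : ℕ) : Module.Basis (Fin d) ℝ (EuclideanSpace ℝ (Fin d)) :=
  (EuclideanSpace.basisFun (Fin d) ℝ).toBasis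

lemma vol_simplex (d : ℕ) (w : Fin d → EuclideanSpace ℝ (Fin d)) :
    volume (convexHull ℝ (insert 0 (Set.range w))) =
      ENNReal.ofReal |LinearMap.det ((stdB d).constr ℝ w)| *
        volume (convexHull ℝ (insert (0 : EuclideanSpace ℝ (Fin d)) (Set.range (stdB d)))) := by
  set f := (stdB d).constr ℝ w with hf
  have himg : f '' (insert 0 (Set.range (stdB d))) = insert 0 (Set.range w) := by
    rw [Set.image_insert_eq, map_zero, ← Set.range_comp]
    have : (⇑f ∘ ⇑(stdB d)) = w := funext fun i => by simp [hf, Module.Basis.constr_basis]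
    rw [this]
  rw [← himg, ← f.image_convexHull, Measure.addHaar_image_linearMap]

lemma c_pos (d : ℕ) :
    0 < volume (convexHull ℝ (insert (0 : EuclideanSpace ℝ (Fin d)) (Set.range (stdB d)))) := by
  have hconv : Convex ℝ (convexHull ℝ (insert (0 : EuclideanSpace ℝ (Fin d)) (Set.range (stdB d)))) :=
    convex_convexHull ℝ _
  have hvs : vectorSpan ℝ (insert (0 : EuclideanSpace ℝ (Fin d)) (Set.range (stdB d))) = ⊤ := by
    refine top_unique ?_
    rw [← (stdB d).span_eq]
    refine Submodule.span_le.mpr fun x hx => ?_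
    have := vsub_mem_vectorSpan ℝ (Set.mem_insert_of_mem _ hx)
      (Set.mem_insert (0 : EuclideanSpace ℝ (Fin d)) _)
    simpa using this
  have hspan : affineSpan ℝ (convexHull ℝ (insert (0 : EuclideanSpace ℝ (Fin d)) (Set.range (stdB d)))) = ⊤ := by
    rw [affineSpan_convexHull,
      AffineSubspace.affineSpan_eq_top_iff_vectorSpan_eq_top_of_nonempty ℝ _ _ ⟨0, Set.mem_insert _ _⟩]
    exact hvs
  obtain ⟨x, hx⟩ := hconv.interior_nonempty_iff_affineSpan_eq_top.mpr hspan
  calc (0 : ENNReal) < volume (interior (convexHull ℝ (insert (0 : EuclideanSpace ℝ (Fin d)) (Set.range (stdB d))))) :=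
        isOpen_interior.measure_pos volume ⟨x, hx⟩
    _ ≤ _ := measure_mono interior_subset

lemma c_lt_top (d : ℕ) :
    volume (convexHull ℝ (insert (0 : EuclideanSpace ℝ (Fin d)) (Set.range (stdB d)))) < ⊤ :=
  (((Set.finite_range _).insert 0).isCompact_convexHull ℝ).measure_lt_top

/-- Let `Q ⊆ ℝ^d` be a convex polytope with `0` in its interior, and
let `v₁,…,v_d` be vertices of `Q` such that `S = conv{0,v₁,…,v_d}` has maximal
volume among all simplices on `0` and `d` vertices of `Q`. Then `v₁,…,v_d` are
linearly independent and `Q ⊆ P = {β₁v₁ + ⋯ + β_d v_d : β_i ∈ [-1,1]}`. -/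
theorem maximal_simplex_parallelotope (d : ℕ)
    (Q : Set (EuclideanSpace ℝ (Fin d)))
    (hQpoly : ∃ V : Finset (EuclideanSpace ℝ (Fin d)), Q = convexHull ℝ (V : Set (EuclideanSpace ℝ (Fin d))))
    (h0 : (0 : EuclideanSpace ℝ (Fin d)) ∈ interior Q)
    (v : Fin d → EuclideanSpace ℝ (Fin d))
    (hvert : ∀ i, v i ∈ Set.extremePoints ℝ Q)
    (hmax : ∀ w : Fin d → EuclideanSpace ℝ (Fin d), (∀ i, w i ∈ Set.extremePoints ℝ Q) →
      volume (convexHull ℝ (insert (0 : EuclideanSpace ℝ (Fin d)) (Set.range w))) ≤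
        volume (convexHull ℝ (insert (0 : EuclideanSpace ℝ (Fin d)) (Set.range v)))) :
    LinearIndependent ℝ v ∧
      Q ⊆ {x : EuclideanSpace ℝ (Fin d) |
        ∃ β : Fin d → ℝ, (∀ i, β i ∈ Set.Icc (-1 : ℝ) 1) ∧ x = ∑ i, β i • v i} := by
  classical
  obtain ⟨V, hQV⟩ := hQpoly
  have hQconv : Convex ℝ Q := hQV ▸ convex_convexHull ℝ _
  have hQcomp : IsCompact Q := hQV ▸ V.finite_toSet.isCompact_convexHull ℝ
  have hext_fin : (Q.extremePoints ℝ).Finite :=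
    V.finite_toSet.subset (by rw [hQV]; exact extremePoints_convexHull_subset)
  have hQe : convexHull ℝ (Q.extremePoints ℝ) = Q := by
    have h := closure_convexHull_extremePoints hQcomp hQconv
    rwa [IsClosed.closure_eq (hext_fin.isClosed_convexHull ℝ)] at h
  -- span of extreme points is ⊤
  have hspanQ : affineSpan ℝ Q = ⊤ :=
    hQconv.interior_nonempty_iff_affineSpan_eq_top.mp ⟨0, h0⟩
  have hvs : vectorSpan ℝ Q = ⊤ :=
    AffineSubspace.vectorSpan_eq_top_of_affineSpan_eq_top ℝ _ _ hspanQ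
  have hspan2 : Submodule.span ℝ Q = ⊤ := by
    rw [eq_top_iff, ← hvs, vectorSpan_def]
    refine Submodule.span_le.mpr ?_
    rintro x ⟨a, ha, b, hb, rfl⟩
    exact sub_mem (Submodule.subset_span ha) (Submodule.subset_span hb)
  have hQsub : Q ⊆ (Submodule.span ℝ (Q.extremePoints ℝ) : Set _) := by
    have h3 : convexHull ℝ (Q.extremePoints ℝ) ⊆ (Submodule.span ℝ (Q.extremePoints ℝ) : Set _) :=
      convexHull_min Submodule.subset_span (Submodule.span ℝ (Q.extremePoints ℝ)).convex
    rwa [hQe] at h3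
  have hspanE : Submodule.span ℝ (Q.extremePoints ℝ) = ⊤ :=
    top_unique (hspan2 ▸ Submodule.span_le.mpr hQsub)
  -- extract a basis of extreme points
  obtain ⟨b, hbsub, hbspan, hbli⟩ := exists_linearIndependent ℝ (Q.extremePoints ℝ)
  rw [hspanE] at hbspan
  let B0 : Module.Basis b ℝ (EuclideanSpace ℝ (Fin d)) := Module.Basis.mk hbli (by rw [Subtype.range_coe, hbspan])
  haveI : Fintype b := FiniteDimensional.fintypeBasisIndex B0
  have hcard : Fintype.card b = d := by
    have h := Module.finrank_eq_card_basis B0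
    simpa [finrank_euclideanSpace_fin] using h.symm
  let e : b ≃ Fin d := Fintype.equivFinOfCardEq hcard
  let w : Fin d → EuclideanSpace ℝ (Fin d) := fun i => (e.symm i : EuclideanSpace ℝ (Fin d))
  have hw_ext : ∀ i, w i ∈ Q.extremePoints ℝ := fun i => hbsub (e.symm i).2
  have hw_li : LinearIndependent ℝ w := hbli.comp e.symm e.symm.injective
  have hw_range : Set.range w = b := by
    ext x
    constructor
    · rintro ⟨i, rfl⟩; exact (e.symm i).2
    · intro hx; exact ⟨e ⟨x, hx⟩, by simp [w]⟩
  have hw_span : Submodule.span ℝ (Set.range w) = ⊤ := by rw [hw_range, hbspan]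
  let Bw : Module.Basis (Fin d) ℝ (EuclideanSpace ℝ (Fin d)) := Module.Basis.mk hw_li (by rw [hw_span])
  have hdetw : LinearMap.det ((stdB d).constr ℝ w) ≠ 0 := by
    have hfw : (stdB d).constr ℝ w = ((stdB d).equiv Bw (Equiv.refl _) : EuclideanSpace ℝ (Fin d) →ₗ[ℝ] EuclideanSpace ℝ (Fin d)) := by
      apply (stdB d).ext
      intro i
      simp [Module.Basis.constr_basis, Module.Basis.equiv_apply, Bw, Module.Basis.mk_apply]
    rw [hfw]
    exact (((stdB d).equiv Bw (Equiv.refl _)).isUnit_det').ne_zero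
  -- positivity of the maximal volume
  have hvolv_pos : 0 < volume (convexHull ℝ (insert (0 : EuclideanSpace ℝ (Fin d)) (Set.range v))) := by
    have h2 : 0 < volume (convexHull ℝ (insert (0 : EuclideanSpace ℝ (Fin d)) (Set.range w))) := by
      rw [vol_simplex]
      exact ENNReal.mul_pos (ENNReal.ofReal_pos.mpr (abs_pos.mpr hdetw)).ne' (c_pos d).ne'
    exact lt_of_lt_of_le h2 (hmax w hw_ext)
  have hdetv : LinearMap.det ((stdB d).constr ℝ v) ≠ 0 := by
    intro h
    rw [vol_simplex, h] at hvolv_pos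
    simp at hvolv_pos
  -- linear independence of v
  have hvinj : Function.Injective ((stdB d).constr ℝ v) := by
    have h2 : (((((stdB d).constr ℝ v)).equivOfDetNeZero hdetv : EuclideanSpace ℝ (Fin d) →ₗ[ℝ] EuclideanSpace ℝ (Fin d)) : EuclideanSpace ℝ (Fin d) →ₗ[ℝ] EuclideanSpace ℝ (Fin d)) = (stdB d).constr ℝ v :=
      LinearEquiv.coe_ofIsUnitDet _
    rw [← h2]
    exact ((((stdB d).constr ℝ v)).equivOfDetNeZero hdetv).injective
  have hv_li : LinearIndependent ℝ v := by
    have h := (stdB d).linearIndependent.map' _ (LinearMap.ker_eq_bot.mpr hvinj)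
    have hve : (⇑((stdB d).constr ℝ v)) ∘ ⇑(stdB d) = v := funext fun i => by
      simp [Module.Basis.constr_basis]
    rwa [hve] at h
  have hv_span : Submodule.span ℝ (Set.range v) = ⊤ := by
    have hve : (⇑((stdB d).constr ℝ v)) ∘ ⇑(stdB d) = v := funext fun i => by
      simp [Module.Basis.constr_basis]
    have h2 : (((((stdB d).constr ℝ v)).equivOfDetNeZero hdetv : EuclideanSpace ℝ (Fin d) →ₗ[ℝ] EuclideanSpace ℝ (Fin d))) = (stdB d).constr ℝ v :=
      LinearEquiv.coe_ofIsUnitDet _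
    rw [← hve, Set.range_comp, ← Submodule.map_span, (stdB d).span_eq, Submodule.map_top, ← h2,
      LinearEquiv.range]
  let Bv : Module.Basis (Fin d) ℝ (EuclideanSpace ℝ (Fin d)) := Module.Basis.mk hv_li (by rw [hv_span])
  have hBv : ∀ i, Bv i = v i := fun i => Module.Basis.mk_apply _ _ _
  -- key claim: extreme points have coordinates in [-1, 1]
  have hkey : ∀ y ∈ Q.extremePoints ℝ, ∀ i, |Bv.repr y i| ≤ 1 := by
    by_contra hc
    push_neg at hc
    obtain ⟨y, hy, i, hi⟩ := hc
    set w' : Fin d → EuclideanSpace ℝ (Fin d) := Function.update v i y with hw'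
    have hw'_ext : ∀ j, w' j ∈ Q.extremePoints ℝ := by
      intro j
      rcases eq_or_ne j i with rfl | hj
      · simpa [hw'] using hy
      · simpa [hw', Function.update_of_ne hj] using hvert j
    set g : EuclideanSpace ℝ (Fin d) →ₗ[ℝ] EuclideanSpace ℝ (Fin d) :=
      (stdB d).constr ℝ (Function.update (⇑(stdB d)) i (∑ j, Bv.repr y j • (stdB d) j)) with hg
    have hcomp : (stdB d).constr ℝ w' = ((stdB d).constr ℝ v) ∘ₗ g := by
      apply (stdB d).ext
      intro j
      rcases eq_or_ne j i with rfl | hj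
      · have hsum : y = ∑ k, Bv.repr y k • v k := by
          conv_lhs => rw [← Bv.sum_repr y]
          exact Finset.sum_congr rfl fun k _ => by rw [hBv]
        rw [Module.Basis.constr_basis, LinearMap.comp_apply, hg, Module.Basis.constr_basis,
          Function.update_self, map_sum, hw', Function.update_self]
        conv_lhs => rw [hsum]
        refine Finset.sum_congr rfl fun k _ => ?_
        rw [LinearMap.map_smul, Module.Basis.constr_basis]
      · simp [hg, hw', Module.Basis.constr_basis, Function.update_of_ne hj]
    have hdetg : LinearMap.det g = Bv.repr y i := by
      rw [← LinearMap.det_toMatrix (stdB d)]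
      have hM : LinearMap.toMatrix (stdB d) (stdB d) g =
          Matrix.updateCol 1 i (fun j => Bv.repr y j) := by
        ext j k
        rcases eq_or_ne k i with rfl | hk
        · simp [LinearMap.toMatrix_apply, hg, Module.Basis.constr_basis, Matrix.updateCol_self,
            map_sum, Module.Basis.repr_self, Finsupp.single_apply]
        · simp [LinearMap.toMatrix_apply, hg, Module.Basis.constr_basis, Function.update_of_ne hk,
            Matrix.updateCol_ne hk, Matrix.one_apply, Module.Basis.repr_self, Finsupp.single_apply,
            eq_comm]
      rw [hM]
      have := Matrix.cramer_apply (1 : Matrix (Fin d) (Fin d) ℝ) (fun j => Bv.repr y j) i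
      rw [← this, Matrix.cramer_one]
      rfl
    have hdet' : |LinearMap.det ((stdB d).constr ℝ w')| =
        |LinearMap.det ((stdB d).constr ℝ v)| * |Bv.repr y i| := by
      rw [hcomp, LinearMap.det_comp, abs_mul, hdetg]
    have hlt : volume (convexHull ℝ (insert (0 : EuclideanSpace ℝ (Fin d)) (Set.range v))) <
        volume (convexHull ℝ (insert (0 : EuclideanSpace ℝ (Fin d)) (Set.range w'))) := by
      rw [vol_simplex d v, vol_simplex d w']
      rw [ENNReal.mul_lt_mul_iff_left (c_pos d).ne' (c_lt_top d).ne]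
      rw [ENNReal.ofReal_lt_ofReal_iff]
      · rw [hdet']
        nth_rewrite 1 [← mul_one |LinearMap.det ((stdB d).constr ℝ v)|]
        exact mul_lt_mul_of_pos_left hi (abs_pos.mpr hdetv)
      · rw [hdet']
        exact mul_pos (abs_pos.mpr hdetv) (lt_trans one_pos hi)
    exact absurd (hmax w' hw'_ext) (not_le.mpr hlt)
  refine ⟨hv_li, ?_⟩
  intro x hx
  have hsub : Q ⊆ {z : EuclideanSpace ℝ (Fin d) | ∀ i, Bv.repr z i ∈ Set.Icc (-1 : ℝ) 1} := by
    rw [← hQe]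
    apply convexHull_min
    · intro z hz i
      exact Set.mem_Icc.mpr (abs_le.mp (hkey z hz i))
    · have hCeq : {z : EuclideanSpace ℝ (Fin d) | ∀ i, Bv.repr z i ∈ Set.Icc (-1 : ℝ) 1} =
          ⋂ i, (Bv.coord i) ⁻¹' (Set.Icc (-1 : ℝ) 1) := by
        ext z
        simp [Module.Basis.coord_apply]
      rw [hCeq]
      exact convex_iInter fun i => (convex_Icc _ _).linear_preimage _
  refine ⟨fun i => Bv.repr x i, fun i => hsub hx i, ?_⟩
  conv_lhs => rw [← Bv.sum_repr x]
  exact Finset.sum_congr rfl fun k _ => by rw [hBv]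
end
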